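/- Let V be a vector space of dimension at least 3 over F_q (q odd) with a nondegenerate symmetric bilinear form, let ⟨p⟩ be a nondegenerate 1-dimensional subspace and m a hyperbolic (plus type) nondegenerate 2-dimensional subspace such that ⟨p⟩ + m is a nondegenerate 3-dimensional subspace. Then there exist at least (q−5)/2 hyperbolic 2-dimensional subspaces through ⟨p⟩ intersecting m in a nondegenerate 1-dimensional subspace. -/

import Mathlib

open Module

/-- A subspace `W` is a *hyperbolic line* for the symmetric bilinear form `B` if it is
2-dimensional, nondegenerate, and contains a nonzero isotropic vector (Witt index 1). -/
def IsHyperbolicLine {F V : Type*} [Field F] [AddCommGroup V] [Module F V]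
    (B : LinearMap.BilinForm F V) (W : Submodule F V) : Prop :=
  finrank F W = 2 ∧ (B.restrict W).Nondegenerate ∧ ∃ v ∈ W, v ≠ 0 ∧ B v v = 0


lemma count_shifted_squares {F : Type*} [Field F] [Fintype F] [DecidableEq F]
    (htwo : (2:F) ≠ 0) (d : F) (hd : d ≠ 0) :
    (Fintype.card F - 3) / 2 ≤
      (Finset.univ.filter (fun v : F => ∃ s : F, s ≠ 0 ∧ v^2 + d = s^2)).card := by
  classical
  set G := Finset.univ.filter (fun v : F => ∃ s : F, s ≠ 0 ∧ v^2 + d = s^2) with hG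
  set T := Finset.univ.filter (fun s : F => s ≠ 0 ∧ s^2 ≠ -d) with hT
  set h : F → F := fun s => (d/s - s)/2 with hh
  have hTcard : Fintype.card F - 3 ≤ T.card := by
    have hcompl : Finset.univ.filter (fun s : F => ¬(s ≠ 0 ∧ s^2 ≠ -d)) ⊆
        insert (0:F) (Finset.univ.filter (fun s : F => s^2 = -d)) := by
      intro s hs
      simp only [Finset.mem_filter, Finset.mem_univ, true_and, not_and_or, not_not,
        not_ne_iff] at hs
      rcases hs with h0 | h1
      · simp [h0]
      · exact Finset.mem_insert_of_mem (by simp [h1])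
    have hroots : (Finset.univ.filter (fun s : F => s^2 = -d)).card ≤ 2 := by
      by_cases hr : ∃ r : F, r^2 = -d
      · obtain ⟨r, hr⟩ := hr
        have hsub : Finset.univ.filter (fun s : F => s^2 = -d) ⊆ {r, -r} := by
          intro s hs
          simp only [Finset.mem_filter, Finset.mem_univ, true_and] at hs
          have h0 : (s - r) * (s + r) = 0 := by linear_combination hs - hr
          rcases mul_eq_zero.mp h0 with h | h
          · simp [sub_eq_zero.mp h]
          · simp [eq_neg_of_add_eq_zero_left h]
        exact (Finset.card_le_card hsub).trans ((Finset.card_insert_le _ _).trans (by simp))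
      · have hempty : Finset.univ.filter (fun s : F => s^2 = -d) = ∅ := by
          ext s
          simp only [Finset.mem_filter, Finset.mem_univ, true_and, Finset.notMem_empty,
            iff_false]
          exact fun hs => hr ⟨s, hs⟩
        simp [hempty]
    have hsplit : T.card + (Finset.univ.filter (fun s : F => ¬(s ≠ 0 ∧ s^2 ≠ -d))).card
        = Fintype.card F := by
      rw [hT, Finset.card_filter_add_card_filter_not]
      exact Finset.card_univ
    have h3 : (Finset.univ.filter (fun s : F => ¬(s ≠ 0 ∧ s^2 ≠ -d))).card ≤ 3 := by
      refine (Finset.card_le_card hcompl).trans ?_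
      refine (Finset.card_insert_le _ _).trans ?_
      omega
    omega
  have himg : T.image h ⊆ G := by
    intro v hv
    obtain ⟨s, hsT, hsv⟩ := Finset.mem_image.mp hv
    simp only [hT, Finset.mem_filter, Finset.mem_univ, true_and] at hsT
    obtain ⟨hs0, hs2⟩ := hsT
    simp only [hG, Finset.mem_filter, Finset.mem_univ, true_and]
    refine ⟨(d/s + s)/2, ?_, ?_⟩
    · intro hw
      apply hs2
      have hw' : d/s + s = 0 := by
        rcases div_eq_zero_iff.mp hw with h | h
        · exact h
        · exact absurd h htwo
      have hds : d + s^2 = 0 := by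
        field_simp at hw'
        linear_combination hw'
      linear_combination hds
    · subst hsv
      simp only [hh]
      field_simp
      ring
  have hfiber : T.card ≤ 2 * (T.image h).card := by
    refine Finset.card_le_mul_card_image T 2 (fun a ha => ?_)
    obtain ⟨s₁, hs₁T, hs₁⟩ := Finset.mem_image.mp ha
    have hsub : T.filter (fun x => h x = a) ⊆ {s₁, -2*a - s₁} := by
      intro s hs
      simp only [Finset.mem_filter] at hs
      obtain ⟨hsT, hsa⟩ := hs
      simp only [hT, Finset.mem_filter, Finset.mem_univ, true_and] at hsT hs₁T
      obtain ⟨hs0, -⟩ := hsT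
      obtain ⟨hs10, -⟩ := hs₁T
      have e1 : s^2 + 2*a*s - d = 0 := by
        have h' : (d/s - s)/2 = a := hsa
        field_simp at h'
        linear_combination -h'
      have e2 : s₁^2 + 2*a*s₁ - d = 0 := by
        have h' : (d/s₁ - s₁)/2 = a := hs₁
        field_simp at h'
        linear_combination -h'
      have h0 : (s - s₁) * (s + s₁ + 2*a) = 0 := by linear_combination e1 - e2
      rcases mul_eq_zero.mp h0 with h | h
      · simp [sub_eq_zero.mp h]
      · have : s = -2*a - s₁ := by linear_combination h
        simp [this]
    exact (Finset.card_le_card hsub).trans ((Finset.card_insert_le _ _).trans (by simp))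
  have : Fintype.card F - 3 ≤ 2 * G.card := by
    calc Fintype.card F - 3 ≤ T.card := hTcard
    _ ≤ 2 * (T.image h).card := hfiber
    _ ≤ 2 * G.card := by
        exact Nat.mul_le_mul_left 2 (Finset.card_le_card himg)
  omega

lemma count_nonzero_squares {F : Type*} [Field F] [Fintype F] [DecidableEq F]
    (htwo : (2:F) ≠ 0) :
    (Fintype.card F - 1) / 2 ≤
      (Finset.univ.filter (fun u : F => ∃ s : F, s ≠ 0 ∧ u = s^2)).card := by
  classical
  set G := Finset.univ.filter (fun u : F => ∃ s : F, s ≠ 0 ∧ u = s^2) with hG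
  set T := Finset.univ.filter (fun s : F => s ≠ 0) with hT
  have hTcard : T.card = Fintype.card F - 1 := by
    rw [hT, Finset.filter_ne', Finset.card_erase_of_mem (Finset.mem_univ _), Finset.card_univ]
  have himg : T.image (fun s => s^2) ⊆ G := by
    intro u hu
    obtain ⟨s, hsT, hsu⟩ := Finset.mem_image.mp hu
    simp only [hT, Finset.mem_filter, Finset.mem_univ, true_and] at hsT
    simp only [hG, Finset.mem_filter, Finset.mem_univ, true_and]
    exact ⟨s, hsT, hsu.symm⟩
  have hfiber : T.card ≤ 2 * (T.image (fun s => s^2)).card := by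
    refine Finset.card_le_mul_card_image T 2 (fun a ha => ?_)
    obtain ⟨s₁, hs₁T, hs₁⟩ := Finset.mem_image.mp ha
    have hsub : T.filter (fun x => x^2 = a) ⊆ {s₁, -s₁} := by
      intro s hs
      simp only [Finset.mem_filter] at hs
      have h0 : (s - s₁) * (s + s₁) = 0 := by linear_combination hs.2 - hs₁
      rcases mul_eq_zero.mp h0 with h | h
      · simp [sub_eq_zero.mp h]
      · simp [eq_neg_of_add_eq_zero_left h]
    exact (Finset.card_le_card hsub).trans ((Finset.card_insert_le _ _).trans (by simp))
  have : Fintype.card F - 1 ≤ 2 * G.card := by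
    calc Fintype.card F - 1 = T.card := hTcard.symm
    _ ≤ 2 * (T.image (fun s => s^2)).card := hfiber
    _ ≤ 2 * G.card := Nat.mul_le_mul_left 2 (Finset.card_le_card himg)
  omega

lemma count_good_t {F : Type*} [Field F] [Fintype F] [DecidableEq F]
    (htwo : (2:F) ≠ 0) (a b c : F) (hc : c ≠ 0) (hdisc : c ≠ 2*a*b) :
    (Fintype.card F - 5) / 2 ≤
      (Finset.univ.filter (fun t : F =>
        t ≠ 0 ∧ ∃ s : F, s ≠ 0 ∧ (a + t*b)^2 - 2*c*t = s^2)).card := by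
  classical
  set S := Finset.univ.filter (fun t : F =>
    t ≠ 0 ∧ ∃ s : F, s ≠ 0 ∧ (a + t*b)^2 - 2*c*t = s^2) with hS
  by_cases hb : b = 0
  · -- linear case
    subst hb
    set G := Finset.univ.filter (fun u : F => ∃ s : F, s ≠ 0 ∧ u = s^2) with hG
    have hinj : ∀ u ∈ G.erase (a^2), ((a^2 - u)/(2*c)) ∈ S ∧ True := by
      intro u hu
      obtain ⟨hne, huG⟩ := Finset.mem_erase.mp hu
      simp only [hG, Finset.mem_filter, Finset.mem_univ, true_and] at huG
      obtain ⟨s, hs0, hus⟩ := huG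
      refine ⟨?_, trivial⟩
      simp only [hS, Finset.mem_filter, Finset.mem_univ, true_and]
      constructor
      · intro h0
        apply hne
        have h2c : (2:F)*c ≠ 0 := mul_ne_zero htwo hc
        rw [div_eq_zero_iff] at h0
        rcases h0 with h0 | h0
        · linear_combination -h0
        · exact absurd h0 h2c
      · refine ⟨s, hs0, ?_⟩
        rw [← hus]
        field_simp
        ring
    have hle : (G.erase (a^2)).card ≤ S.card := by
      refine Finset.card_le_card_of_injOn (fun u => (a^2 - u)/(2*c)) (fun u hu => (hinj u hu).1) ?_
      intro u₁ h₁ u₂ h₂ he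
      have h2c : (2:F)*c ≠ 0 := mul_ne_zero htwo hc
      field_simp at he
      try exact he
      try linear_combination he
      try linear_combination -he
    have hGcard : (Fintype.card F - 1) / 2 ≤ G.card := count_nonzero_squares htwo
    have : G.card - 1 ≤ (G.erase (a^2)).card := Finset.pred_card_le_card_erase
    omega
  · -- quadratic case
    set d := c*(2*a*b - c)/b^2 with hd
    have hd0 : d ≠ 0 := by
      rw [hd]
      apply div_ne_zero
      · exact mul_ne_zero hc (by intro h; apply hdisc; linear_combination -h)
      · exact pow_ne_zero 2 hb
    set G := Finset.univ.filter (fun v : F => ∃ s : F, s ≠ 0 ∧ v^2 + d = s^2) with hG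
    set v₀ := a - c/b with hv₀
    have hle : (G.erase v₀).card ≤ S.card := by
      refine Finset.card_le_card_of_injOn (fun v => (v - v₀)/b) ?_ ?_
      · intro v hv
        obtain ⟨hne, hvG⟩ := Finset.mem_erase.mp hv
        simp only [hG, Finset.mem_filter, Finset.mem_univ, true_and] at hvG
        obtain ⟨s, hs0, hvs⟩ := hvG
        simp only [hS, Finset.mem_coe, Finset.mem_filter, Finset.mem_univ, true_and]
        constructor
        · intro h0
          apply hne
          rcases div_eq_zero_iff.mp h0 with h | h
          · linear_combination h
          · exact absurd h hb
        · refine ⟨s, hs0, ?_⟩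
          rw [← hvs, hv₀, hd]
          field_simp
          ring
      · intro u₁ h₁ u₂ h₂ he
        field_simp at he
        linear_combination he
    have hGcard : (Fintype.card F - 3) / 2 ≤ G.card := count_shifted_squares htwo d hd0
    have : G.card - 1 ≤ (G.erase v₀).card := Finset.pred_card_le_card_erase
    omega


lemma finrank_span_pair' {F V : Type*} [Field F] [AddCommGroup V] [Module F V] {x y : V}
    (h : LinearIndependent F ![x, y]) :
    finrank F (Submodule.span F {x, y} : Submodule F V) = 2 := by
  have hr : ({x, y} : Set V) = Set.range ![x, y] := (Matrix.range_cons_cons_empty x y _).symm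
  rw [hr, finrank_span_eq_card h]
  simp

lemma line_is_good {F V : Type*} [Field F] [AddCommGroup V] [Module F V]
    (B : LinearMap.BilinForm F V) (hsymm : B.IsSymm) (htwo : (2:F) ≠ 0)
    {p e f : V} {m : Submodule F V}
    (hem : e ∈ m) (hfm : f ∈ m)
    (hee : B e e = 0) (hff : B f f = 0) (hef : B e f = 1)
    (hpm : p ∉ m) (hpp : B p p ≠ 0)
    {t s : F} (ht : t ≠ 0) (hs : s ≠ 0)
    (hgs : (B p e + t * (B p f))^2 - 2 * (B p p) * t = s^2) :
    p ∈ Submodule.span F {p, e + t • f} ∧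
    IsHyperbolicLine B (Submodule.span F {p, e + t • f}) ∧
    finrank F ((Submodule.span F {p, e + t • f}) ⊓ m : Submodule F V) = 1 ∧
    (B.restrict ((Submodule.span F {p, e + t • f}) ⊓ m)).Nondegenerate := by
  have hsy : ∀ u v : V, B u v = B v u := fun u v => hsymm.eq u v
  set x := e + t • f with hx
  set L := Submodule.span F {p, e + t • f} with hL
  set c := B p p with hc
  set A := B p e + t * (B p f) with hA
  have hpL : p ∈ L := Submodule.subset_span (by simp)
  have hxL : x ∈ L := Submodule.subset_span (by simp [hx])
  have hxm : x ∈ m := m.add_mem hem (m.smul_mem t hfm)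
  have hxf : B x f = 1 := by
    simp only [hx, map_add, map_smul, LinearMap.add_apply, LinearMap.smul_apply, smul_eq_mul,
      hef, hff]
    ring
  have hx0 : x ≠ 0 := by
    intro h0
    rw [h0] at hxf
    simp at hxf
  have hpx : B p x = A := by
    simp only [hx, hA, map_add, map_smul, smul_eq_mul]
  have hxp : B x p = A := by rw [hsy x p, hpx]
  have hfe : B f e = 1 := by rw [hsy f e, hef]
  have hxx : B x x = 2 * t := by
    simp only [hx, map_add, map_smul, LinearMap.add_apply, LinearMap.smul_apply, smul_eq_mul,
      hee, hff, hef, hfe]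
    ring
  have hp0 : p ≠ 0 := by intro h0; exact hpp (by rw [hc, h0]; simp)
  have hxnotp : ∀ a : F, a • p ≠ x := by
    intro a ha
    apply hpm
    have ha0 : a ≠ 0 := by
      intro h0; rw [h0, zero_smul] at ha; exact hx0 ha.symm
    have : p = a⁻¹ • x := by
      rw [← ha, smul_smul, inv_mul_cancel₀ ha0, one_smul]
    rw [this]
    exact m.smul_mem _ hxm
  have hli : LinearIndependent F ![p, x] := (LinearIndependent.pair_iff' hp0).mpr hxnotp
  have hrank : finrank F L = 2 := finrank_span_pair' hli
  have hdisc : c * (2 * t) - A^2 ≠ 0 := by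
    intro h0
    apply hs
    have : s^2 = 0 := by linear_combination -hgs - h0
    exact pow_eq_zero_iff (by norm_num) |>.mp this
  -- nondegeneracy of the restriction to L
  have expand : ∀ (α β : F) (y : V), B (α • p + β • x) y = α * B p y + β * B x y := by
    intro α β y
    simp [map_add, map_smul, LinearMap.add_apply, LinearMap.smul_apply, smul_eq_mul]
  have hndL : (B.restrict L).Nondegenerate := by
    suffices hsl : LinearMap.SeparatingLeft (B.restrict L) from
      ⟨hsl, fun z hz => hsl z (fun y => (hsy _ _).trans (hz y))⟩
    intro z hz
    obtain ⟨α, β, hz'⟩ := Submodule.mem_span_pair.mp z.2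
    rw [← hx] at hz'
    have h1 : B (z : V) p = 0 := hz ⟨p, hpL⟩
    have h2 : B (z : V) x = 0 := hz ⟨x, hxL⟩
    rw [← hz'] at h1 h2
    rw [expand, hxp, ← hc] at h1
    rw [expand, hpx, hxx] at h2
    have hα : α * (c * (2*t) - A^2) = 0 := by linear_combination 2*t*h1 - A*h2
    have hα0 : α = 0 := by
      rcases mul_eq_zero.mp hα with h | h
      · exact h
      · exact absurd h hdisc
    have hβ0 : β = 0 := by
      rw [hα0] at h2
      simp only [zero_mul, zero_add] at h2
      rcases mul_eq_zero.mp h2 with h | h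
      · exact h
      · exact absurd h (mul_ne_zero htwo ht)
    apply Subtype.ext
    rw [← hz', hα0, hβ0]
    simp
  -- isotropic vector
  have hiso : ∃ v ∈ L, v ≠ 0 ∧ B v v = 0 := by
    refine ⟨((s - A)/c) • p + x, L.add_mem (L.smul_mem _ hpL) hxL, ?_, ?_⟩
    · intro h0
      apply hxnotp (-((s - A)/c))
      rw [neg_smul]
      exact neg_eq_of_add_eq_zero_right h0
    · have hBvv : B (((s - A)/c) • p + x) (((s - A)/c) • p + x)
          = ((s-A)/c)^2 * c + 2*((s-A)/c)*A + 2*t := by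
        simp only [map_add, map_smul, LinearMap.add_apply, LinearMap.smul_apply, smul_eq_mul,
          hpx, hxp, hxx, ← hc]
        ring
      rw [hBvv]
      field_simp
      try linear_combination hgs
      try linear_combination -hgs
      try linear_combination c*hgs
      try linear_combination -c*hgs
      try linear_combination c^2*hgs
      try linear_combination -c^2*hgs
  -- intersection is span of x
  have hinter : L ⊓ m = Submodule.span F {x} := by
    apply le_antisymm
    · intro z hz
      obtain ⟨hzL, hzm⟩ := hz
      obtain ⟨α, β, hz'⟩ := Submodule.mem_span_pair.mp hzL
      have hαp : α • p = z - β • x := by rw [← hz']; abel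
      have hα0 : α = 0 := by
        by_contra hα
        apply hpm
        have : p = α⁻¹ • (z - β • x) := by
          rw [← hαp, smul_smul, inv_mul_cancel₀ hα, one_smul]
        rw [this]
        exact m.smul_mem _ (m.sub_mem hzm (m.smul_mem _ hxm))
      rw [← hz', hα0, zero_smul, zero_add]
      exact Submodule.smul_mem _ _ (Submodule.mem_span_singleton_self x)
    · rw [Submodule.span_le]
      intro y hy
      rw [Set.mem_singleton_iff] at hy
      subst hy
      exact ⟨hxL, hxm⟩
  have hrank1 : finrank F (L ⊓ m : Submodule F V) = 1 := by
    rw [hinter]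
    exact finrank_span_singleton hx0
  have hndint : (B.restrict (L ⊓ m)).Nondegenerate := by
    suffices hsl : LinearMap.SeparatingLeft (B.restrict (L ⊓ m)) from
      ⟨hsl, fun z hz => hsl z (fun y => (hsy _ _).trans (hz y))⟩
    intro z hz
    have hzx : (z : V) ∈ Submodule.span F {x} := hinter ▸ z.2
    obtain ⟨γ, hγ⟩ := Submodule.mem_span_singleton.mp hzx
    have hxmem : x ∈ L ⊓ m := ⟨hxL, hxm⟩
    have h2 : B (z : V) x = 0 := hz ⟨x, hxmem⟩
    rw [← hγ] at h2
    rw [map_smul, LinearMap.smul_apply, smul_eq_mul, hxx] at h2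
    have hγ0 : γ = 0 := by
      rcases mul_eq_zero.mp h2 with h | h
      · exact h
      · exact absurd h (mul_ne_zero htwo ht)
    apply Subtype.ext
    rw [← hγ, hγ0]
    simp
  exact ⟨hpL, ⟨hrank, hndL, hiso⟩, hrank1, hndint⟩

lemma exists_hyperbolic_basis {F V : Type*} [Field F] [AddCommGroup V] [Module F V]
    (B : LinearMap.BilinForm F V) (hsymm : B.IsSymm) (htwo : (2:F) ≠ 0)
    {m : Submodule F V} (hm : IsHyperbolicLine B m) :
    ∃ e f : V, e ∈ m ∧ f ∈ m ∧ B e e = 0 ∧ B f f = 0 ∧ B e f = 1 ∧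
      m = Submodule.span F {e, f} := by
  have hsy : ∀ u v : V, B u v = B v u := fun u v => hsymm.eq u v
  obtain ⟨hrank, hnd, v, hvm, hv0, hvv⟩ := hm
  have hw : ∃ w : m, B v (w : V) ≠ 0 := by
    by_contra h
    push_neg at h
    have hz : (⟨v, hvm⟩ : m) = 0 := hnd.1 ⟨v, hvm⟩ (fun n => h n)
    exact hv0 (by simpa using congrArg Subtype.val hz)
  obtain ⟨w, hw⟩ := hw
  set f₀ : V := (B v (w : V))⁻¹ • (w : V) with hf₀
  have hf₀m : f₀ ∈ m := m.smul_mem _ w.2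
  have hvf₀ : B v f₀ = 1 := by
    rw [hf₀, map_smul, smul_eq_mul, inv_mul_cancel₀ hw]
  set k : F := B f₀ f₀ / 2 with hk
  set f : V := f₀ - k • v with hf
  have hfm : f ∈ m := m.sub_mem hf₀m (m.smul_mem _ hvm)
  have hvf : B v f = 1 := by
    rw [hf, map_sub, hvf₀, map_smul, smul_eq_mul, hvv]
    ring
  have hff : B f f = 0 := by
    have hf₀v : B f₀ v = 1 := by rw [hsy f₀ v, hvf₀]
    rw [hf]
    simp only [map_sub, map_smul, LinearMap.sub_apply, LinearMap.smul_apply, smul_eq_mul,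
      hvv, hf₀v, hvf₀]
    field_simp [hk]
    rw [hk]
    linear_combination (-(B f₀ f₀)) * (inv_mul_cancel₀ htwo)
  have hli : LinearIndependent F ![v, f] := by
    refine (LinearIndependent.pair_iff' hv0).mpr ?_
    intro a ha
    have : B v f = a * B v v := by rw [← ha, map_smul, smul_eq_mul]
    rw [hvf, hvv] at this
    simp at this
  have hfd : FiniteDimensional F m := Module.finite_of_finrank_pos (by omega)
  have hspan : Submodule.span F {v, f} = m := by
    apply Submodule.eq_of_le_of_finrank_eq
    · rw [Submodule.span_le]
      intro y hy
      rcases hy with hy | hy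
      · rw [hy]; exact hvm
      · rw [Set.mem_singleton_iff.mp hy]; exact hfm
    · rw [finrank_span_pair' hli, hrank]
  exact ⟨v, f, hvm, hfm, hvv, hff, hvf, hspan.symm⟩

/-- Over `F_q` (`q` odd), in a space of dimension at least 3 with a nondegenerate
symmetric bilinear form: if `⟨p⟩` is a nondegenerate point and `m` a hyperbolic line
with `⟨p⟩ + m` a nondegenerate 3-space, then at least `(q-5)/2` hyperbolic lines
through `⟨p⟩` meet `m` in a nondegenerate point. -/
theorem hyperbolic_lines_through_point_meeting_hyperbolic_line
    {F V : Type*} [Field F] [Fintype F] [AddCommGroup V] [Module F V]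
    (q : ℕ) (hq : Fintype.card F = q) (hodd : Odd q) (hdim : 3 ≤ finrank F V)
    (B : LinearMap.BilinForm F V) (hsymm : B.IsSymm) (hB : B.Nondegenerate)
    (p : V) (hp : B p p ≠ 0)
    (m : Submodule F V) (hm : IsHyperbolicLine B m)
    (h3 : finrank F (Submodule.span F {p} ⊔ m : Submodule F V) = 3)
    (hnd : (B.restrict (Submodule.span F {p} ⊔ m)).Nondegenerate) :
    (q - 5) / 2 ≤ Set.ncard {m' : Submodule F V | p ∈ m' ∧ IsHyperbolicLine B m' ∧
      finrank F (m' ⊓ m : Submodule F V) = 1 ∧ (B.restrict (m' ⊓ m)).Nondegenerate} := by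
  classical
  have hsy : ∀ u v : V, B u v = B v u := fun u v => hsymm.eq u v
  -- characteristic not 2
  have hchar : ringChar F ≠ 2 := by
    intro h
    have h2 := FiniteField.even_card_iff_char_two.mp h
    obtain ⟨k, hk⟩ := hodd
    omega
  have htwo : (2 : F) ≠ 0 := by
    intro h
    apply hchar
    have hdvd : ringChar F ∣ 2 := (ringChar.spec F 2).mp (by exact_mod_cast h)
    rcases CharP.char_is_prime_or_zero F (ringChar F) with hpr | h0
    · exact (Nat.prime_dvd_prime_iff_eq hpr Nat.prime_two).mp hdvd
    · rw [h0] at hdvd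
      exact absurd (Nat.eq_zero_of_zero_dvd hdvd) (by norm_num)
  -- p not in m
  have hpm : p ∉ m := by
    intro hpmem
    have hle : Submodule.span F {p} ≤ m := by
      rw [Submodule.span_le]
      simpa using hpmem
    rw [sup_eq_right.mpr hle] at h3
    rw [hm.1] at h3
    exact absurd h3 (by norm_num)
  obtain ⟨e, f, hem, hfm, hee, hff, hef, hmspan⟩ := exists_hyperbolic_basis B hsymm htwo hm
  have hfe : B f e = 1 := by rw [hsy f e, hef]
  have he0 : e ≠ 0 := by
    intro h0
    rw [h0] at hef
    simp at hef
  have hlief : LinearIndependent F ![e, f] := by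
    refine (LinearIndependent.pair_iff' he0).mpr ?_
    intro a ha
    have : B e f = a * B e e := by rw [← ha, map_smul, smul_eq_mul]
    rw [hef, hee] at this
    simp at this
  -- the determinant condition
  have hdet : B p p ≠ 2 * B p e * B p f := by
    intro hc2
    set z : V := p - (B p f) • e - (B p e) • f with hz
    have hpU : p ∈ Submodule.span F {p} ⊔ m :=
      le_sup_left (α := Submodule F V) (Submodule.mem_span_singleton_self p)
    have heU : e ∈ Submodule.span F {p} ⊔ m := le_sup_right (α := Submodule F V) hem
    have hfU : f ∈ Submodule.span F {p} ⊔ m := le_sup_right (α := Submodule F V) hfm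
    have hzU : z ∈ Submodule.span F {p} ⊔ m := by
      apply Submodule.sub_mem _ (Submodule.sub_mem _ hpU (Submodule.smul_mem _ _ heU))
        (Submodule.smul_mem _ _ hfU)
    have hzp : B z p = 0 := by
      rw [hz]
      simp only [map_sub, map_smul, LinearMap.sub_apply, LinearMap.smul_apply, smul_eq_mul,
        hsy e p, hsy f p]
      linear_combination hc2
    have hze : B z e = 0 := by
      rw [hz]
      simp only [map_sub, map_smul, LinearMap.sub_apply, LinearMap.smul_apply, smul_eq_mul,
        hee, hfe]
      ring
    have hzf : B z f = 0 := by
      rw [hz]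
      simp only [map_sub, map_smul, LinearMap.sub_apply, LinearMap.smul_apply, smul_eq_mul,
        hff, hef]
      ring
    have hz0 : z = 0 := by
      have hker := hnd.1 ⟨z, hzU⟩ (fun n => ?_)
      · simpa using congrArg Subtype.val hker
      · obtain ⟨y₁, hy₁, y₂, hy₂, hysum⟩ := Submodule.mem_sup.mp n.2
        obtain ⟨γ, hγ⟩ := Submodule.mem_span_singleton.mp hy₁
        rw [hmspan] at hy₂
        obtain ⟨δ, ε, hδε⟩ := Submodule.mem_span_pair.mp hy₂
        have hval : B z (n : V) = 0 := by
          rw [← hysum, ← hγ, ← hδε]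
          simp only [map_add, map_smul, smul_eq_mul, hzp, hze, hzf]
          ring
        exact hval
    apply hpm
    rw [hz, sub_sub, sub_eq_zero] at hz0
    rw [hz0]
    exact m.add_mem (m.smul_mem _ hem) (m.smul_mem _ hfm)
  -- the finset of good parameters
  have hp0 : p ≠ 0 := by intro h0; rw [h0] at hp; simp at hp
  set S := Finset.univ.filter (fun t : F =>
    t ≠ 0 ∧ ∃ s : F, s ≠ 0 ∧ (B p e + t * B p f)^2 - 2 * B p p * t = s^2) with hSdef
  have hScard : (q - 5) / 2 ≤ S.card := by
    rw [← hq]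
    exact count_good_t htwo (B p e) (B p f) (B p p) hp hdet
  set Tset := {m' : Submodule F V | p ∈ m' ∧ IsHyperbolicLine B m' ∧
      finrank F (m' ⊓ m : Submodule F V) = 1 ∧ (B.restrict (m' ⊓ m)).Nondegenerate}
    with hTset
  set Lmap : F → Submodule F V := fun t => Submodule.span F {p, e + t • f} with hLmap
  have hmemT : ∀ t ∈ S, Lmap t ∈ Tset := by
    intro t ht
    simp only [hSdef, Finset.mem_filter, Finset.mem_univ, true_and] at ht
    obtain ⟨ht0, s, hs0, hgs⟩ := ht
    simp only [hTset, hLmap, Set.mem_setOf_eq]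
    exact line_is_good B hsymm htwo hem hfm hee hff hef hpm hp ht0 hs0 hgs
  have hinj : Set.InjOn Lmap (S : Set F) := by
    intro t₁ h₁ t₂ h₂ hL
    by_contra hne
    have hx2 : e + t₂ • f ∈ Submodule.span F {p, e + t₁ • f} := by
      have : e + t₂ • f ∈ Lmap t₂ := Submodule.subset_span (by simp)
      rw [← hL] at this
      exact this
    obtain ⟨α, β, hαβ⟩ := Submodule.mem_span_pair.mp hx2
    have hα0 : α = 0 := by
      by_contra hα
      apply hpm
      have hmem : α • p = (e + t₂ • f) - β • (e + t₁ • f) := by rw [← hαβ]; abel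
      have hpeq : p = α⁻¹ • ((e + t₂ • f) - β • (e + t₁ • f)) := by
        rw [← hmem, smul_smul, inv_mul_cancel₀ hα, one_smul]
      rw [hpeq]
      exact m.smul_mem _ (m.sub_mem (m.add_mem hem (m.smul_mem _ hfm))
        (m.smul_mem _ (m.add_mem hem (m.smul_mem _ hfm))))
    rw [hα0, zero_smul, zero_add] at hαβ
    have hcomb : (β - 1) • e + (β * t₁ - t₂) • f = 0 := by
      rw [smul_add, smul_smul] at hαβ
      have h0 := sub_eq_zero.mpr hαβ
      rw [← h0, sub_smul, sub_smul, one_smul]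
      abel
    obtain ⟨hb1, hb2⟩ := (LinearIndependent.pair_iff.mp hlief) _ _ hcomb
    apply hne
    have hβ : β = 1 := by linear_combination hb1
    rw [hβ, one_mul] at hb2
    linear_combination hb2
  have hfinm : (m : Set V).Finite := by
    haveI : Module.Finite F m := Module.finite_of_finrank_pos (by rw [hm.1]; norm_num)
    haveI : Finite m := Module.finite_of_finite F
    exact Set.toFinite _
  have hTsub : Tset ⊆ (fun x => Submodule.span F {p, x}) '' (m : Set V) := by
    intro m' hm'
    obtain ⟨hpm', hhyp, hr1, -⟩ := hm'
    have hbot : m' ⊓ m ≠ ⊥ := by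
      intro h
      rw [h] at hr1
      simp at hr1
    obtain ⟨x, hxmem, hx0⟩ := (Submodule.ne_bot_iff _).mp hbot
    have hxm' : x ∈ m' := hxmem.1
    have hxm : x ∈ m := hxmem.2
    have hlipx : LinearIndependent F ![p, x] := by
      refine (LinearIndependent.pair_iff' hp0).mpr ?_
      intro a ha
      apply hpm
      have ha0 : a ≠ 0 := by
        intro h0
        rw [h0, zero_smul] at ha
        exact hx0 ha.symm
      have : p = a⁻¹ • x := by rw [← ha, smul_smul, inv_mul_cancel₀ ha0, one_smul]
      rw [this]
      exact m.smul_mem _ hxm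
    haveI : FiniteDimensional F m' := Module.finite_of_finrank_pos (by rw [hhyp.1]; norm_num)
    have hle : Submodule.span F {p, x} ≤ m' := by
      rw [Submodule.span_le]
      intro y hy
      rcases hy with hy | hy
      · rw [hy]; exact hpm'
      · rw [Set.mem_singleton_iff.mp hy]; exact hxm'
    have heq : Submodule.span F {p, x} = m' :=
      Submodule.eq_of_le_of_finrank_eq hle (by rw [finrank_span_pair' hlipx, hhyp.1])
    exact ⟨x, hxm, heq⟩
  have hTfin : Tset.Finite := (hfinm.image _).subset hTsub
  calc (q - 5) / 2 ≤ S.card := hScard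
    _ = (S : Set F).ncard := (Set.ncard_coe_finset S).symm
    _ = (Lmap '' (S : Set F)).ncard := (Set.ncard_image_of_injOn hinj).symm
    _ ≤ Tset.ncard := by
        refine Set.ncard_le_ncard ?_ hTfin
        rintro y ⟨t, ht, rfl⟩
        exact hmemT t (by exact_mod_cast ht)
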